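/- arXiv:1507.07771 — 2 statements merged into one kernel-verified Lean document; each statement's English description precedes it below -/
import Mathlib

section
/- Let m ≥ 1 be an integer, A, B reals with 0 < A < 1 and 2mA + B = m (so A·i + B > 0 for all integers i ≥ m), and D > 0. Then K(d)·d^{1/A} tends to (D/(A·m))·Γ(m + (B+1)/A)/(A·Γ(m + B/A)) as d → ∞; that is, K(d) is asymptotically equivalent to (D/(A·m))·[Γ(m + (B+1)/A)/(A·Γ(m + B/A))]·d^{−1/A}. -/
open MeasureTheory ProbabilityTheory Real Filter

noncomputable section

/-- `c(m,d)` from the paper. -/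
def cmd (m : ℕ) (A B : ℝ) (d : ℕ) : ℝ :=
  (Real.Gamma (d + B / A) * Real.Gamma (m + (B + 1) / A)) /
    (A * Real.Gamma (d + (B + A + 1) / A) * Real.Gamma (m + B / A))

/-- `K(d)` from the paper. -/
def Kd (m : ℕ) (A B D : ℝ) (d : ℕ) : ℝ :=
  cmd m A B d * (D + D / m * ∑ i ∈ Finset.Ico m d, (i : ℝ) / (A * i + B))

variable {Ω : Type*}

/-- The degree of vertex `v` in the multigraph at time `n`, where
`e n i j` is the number of edges between `i` and `j` (`e n v v` counts loops,
each contributing `2` to the degree). -/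
def degOf (e : ℕ → ℕ → ℕ → Ω → ℕ) (n v : ℕ) (ω : Ω) : ℕ :=
  (∑ j ∈ Finset.Icc 1 n, e n v j ω) + e n v v ω

/-- The σ-algebra generated by the graph at time `n`. -/
def sigmaOf [MeasurableSpace Ω] (e : ℕ → ℕ → ℕ → Ω → ℕ) (n : ℕ) : MeasurableSpace Ω :=
  ⨆ i : ℕ, ⨆ j : ℕ, MeasurableSpace.comap (fun ω => e n i j ω) ⊤

/-- `N_n(d)`: the number of vertices of degree `d` at time `n`. -/
def Ncount (e : ℕ → ℕ → ℕ → Ω → ℕ) (n d : ℕ) (ω : Ω) : ℕ :=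
  ((Finset.Icc 1 n).filter (fun v => degOf e n v ω = d)).card

/-- The set of neighbours of `v` (distinct from `v`) at time `n`. -/
def nbrOf (e : ℕ → ℕ → ℕ → Ω → ℕ) (n v : ℕ) (ω : Ω) : Finset ℕ :=
  (Finset.Icc 1 n).filter (fun j => j ≠ v ∧ 1 ≤ e n v j ω)

/-- `T_n(d)`: the number of edges (without multiplicity) between neighbours of
vertices of degree `d`, summed over all vertices of degree `d`. -/
def Tcount (e : ℕ → ℕ → ℕ → Ω → ℕ) (n d : ℕ) (ω : Ω) : ℕ :=
  ∑ v ∈ (Finset.Icc 1 n).filter (fun v => degOf e n v ω = d),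
    (((nbrOf e n v ω) ×ˢ (nbrOf e n v ω)).filter
      (fun p => p.1 < p.2 ∧ 1 ≤ e n p.1 p.2 ω)).card


/-- The number of triangles of the simple graph underlying `G_m^n`
(loops and edge multiplicities discarded). -/
def triCount (e : ℕ → ℕ → ℕ → Ω → ℕ) (n : ℕ) (ω : Ω) : ℕ :=
  ((Finset.Icc 1 n ×ˢ Finset.Icc 1 n ×ˢ Finset.Icc 1 n).filter
    (fun t => t.1 < t.2.1 ∧ t.2.1 < t.2.2 ∧
      1 ≤ e n t.1 t.2.1 ω ∧ 1 ≤ e n t.2.1 t.2.2 ω ∧ 1 ≤ e n t.1 t.2.2 ω)).card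

/-- The number of pairs of adjacent edges (paths of length two) of the simple
graph underlying `G_m^n`. -/
def pathCount (e : ℕ → ℕ → ℕ → Ω → ℕ) (n : ℕ) (ω : Ω) : ℕ :=
  ∑ v ∈ Finset.Icc 1 n, ((nbrOf e n v ω).card).choose 2

/-- The global clustering coefficient `C₁(G_m^n)`. -/
def globalCC (e : ℕ → ℕ → ℕ → Ω → ℕ) (n : ℕ) (ω : Ω) : ℝ :=
  3 * triCount e n ω / pathCount e n ω

/-- `W_n`: the sum of the squares of the degrees of all vertices of `G_m^n`. -/
def Wsum (e : ℕ → ℕ → ℕ → Ω → ℕ) (n : ℕ) (ω : Ω) : ℕ :=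
  ∑ v ∈ Finset.Icc 1 n, (degOf e n v ω) ^ 2

/-- A random graph process from the PA-class with parameters `m`, `A`, `B`,
starting at time `n₀`. -/
structure PAGraphProcess (m n₀ : ℕ) (A B : ℝ) (Ω : Type*) [MeasurableSpace Ω]
    (μ : Measure Ω) : Type _ where
  /-- `e n i j ω` is the number of edges between vertices `i` and `j` in `G_m^n`. -/
  e : ℕ → ℕ → ℕ → Ω → ℕ
  meas_e : ∀ n i j, Measurable (e n i j)
  symm : ∀ n i j ω, e n i j ω = e n j i ω
  /-- at time `n` the vertex set is `{1, …, n}` -/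
  edges_supp : ∀ n, n₀ ≤ n → ∀ i j (ω : Ω),
    i ∉ Finset.Icc 1 n ∨ j ∉ Finset.Icc 1 n → e n i j ω = 0
  /-- `G_m^n` has `m · n` edges -/
  edges_total : ∀ n, n₀ ≤ n → ∀ ω : Ω,
    ∑ p ∈ (Finset.Icc 1 n ×ˢ Finset.Icc 1 n).filter (fun p => p.1 ≤ p.2),
      e n p.1 p.2 ω = m * n
  /-- `G_m^{n+1}` is obtained from `G_m^n` by keeping all old edges … -/
  edges_extend : ∀ n, n₀ ≤ n → ∀ i j, i ≤ n → j ≤ n → ∀ ω : Ω,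
    e (n + 1) i j ω = e n i j ω
  /-- … and adding the vertex `n+1` together with `m` new edges joining it to `{1,…,n+1}` -/
  edges_new : ∀ n, n₀ ≤ n → ∀ ω : Ω, ∑ j ∈ Finset.Icc 1 (n + 1), e (n + 1) (n + 1) j ω = m
  /-- the constant in the error terms -/
  C : ℝ
  hC : 0 < C
  cond_stay : ∀ n, n₀ ≤ n → ∀ v, 1 ≤ v → v ≤ n → ∀ᵐ ω ∂μ,
    |(μ⟦{ω' | degOf e (n + 1) v ω' = degOf e n v ω'} | sigmaOf e n⟧) ω -
        (1 - A * degOf e n v ω / n - B / n)| ≤ C * (degOf e n v ω) ^ 2 / n ^ 2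
  cond_step : ∀ n, n₀ ≤ n → ∀ v, 1 ≤ v → v ≤ n → ∀ᵐ ω ∂μ,
    |(μ⟦{ω' | degOf e (n + 1) v ω' = degOf e n v ω' + 1} | sigmaOf e n⟧) ω -
        (A * degOf e n v ω / n + B / n)| ≤ C * (degOf e n v ω) ^ 2 / n ^ 2
  cond_jump : ∀ n, n₀ ≤ n → ∀ v, 1 ≤ v → v ≤ n → ∀ j, 2 ≤ j → j ≤ m → ∀ᵐ ω ∂μ,
    (μ⟦{ω' | degOf e (n + 1) v ω' = degOf e n v ω' + j} | sigmaOf e n⟧) ω ≤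
      C * (degOf e n v ω) ^ 2 / n ^ 2
  cond_new : ∀ n, n₀ ≤ n → ∀ j, 1 ≤ j → j ≤ m →
    μ {ω | degOf e (n + 1) (n + 1) ω = m + j} ≤ ENNReal.ofReal (C / n)

/-- A random graph process from the T-subclass of the PA-class, with
triangle-formation parameter `D`. -/
structure PATProcess (m n₀ : ℕ) (A B D : ℝ) (Ω : Type*) [MeasurableSpace Ω]
    (μ : Measure Ω) extends PAGraphProcess m n₀ A B Ω μ : Type _ where
  cond_tri : ∀ n, n₀ ≤ n → ∀ i j, 1 ≤ i → i < j → j ≤ n → ∀ᵐ ω ∂μ,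
    |(μ⟦{ω' | degOf e (n + 1) i ω' = degOf e n i ω' + 1 ∧
              degOf e (n + 1) j ω' = degOf e n j ω' + 1} | sigmaOf e n⟧) ω -
        (e n i j ω) * D / (m * n)| ≤ C * degOf e n i ω * degOf e n j ω / n ^ 2




/-- Wendel's squeeze: for `s ∈ [0,1]`, `Γ(x+s)/(Γ(x) x^s) → 1`. -/
lemma wendel {s : ℝ} (hs0 : 0 ≤ s) (hs1 : s ≤ 1) :
    Tendsto (fun x : ℝ => Real.Gamma (x + s) / (Real.Gamma x * x ^ s)) atTop (nhds 1) := by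
  have hlo : Tendsto (fun x : ℝ => (x / (x + s)) ^ (1 - s)) atTop (nhds 1) := by
    have h1 : Tendsto (fun x : ℝ => x / (x + s)) atTop (nhds 1) := by
      have h2 : Tendsto (fun x : ℝ => 1 - s / (x + s)) atTop (nhds 1) := by
        have := (tendsto_const_nhds (x := s)).div_atTop
          (tendsto_atTop_add_const_right atTop s tendsto_id)
        simpa using (tendsto_const_nhds (x := (1:ℝ))).sub this
      apply h2.congr'
      filter_upwards [eventually_gt_atTop (0:ℝ)] with x hx
      have hxs : x + s ≠ 0 := by positivity
      field_simp
      ring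
    simpa using h1.rpow_const (Or.inr (by linarith))
  refine tendsto_of_tendsto_of_tendsto_of_le_of_le' hlo tendsto_const_nhds ?_ ?_
  · -- lower bound
    filter_upwards [eventually_gt_atTop (0:ℝ)] with x hx
    have hxs : 0 < x + s := by linarith
    have hΓx : 0 < Real.Gamma x := Real.Gamma_pos_of_pos hx
    have hΓxs : 0 < Real.Gamma (x + s) := Real.Gamma_pos_of_pos hxs
    have hconv := Real.convexOn_log_Gamma.2 (Set.mem_Ioi.2 hxs)
      (Set.mem_Ioi.2 (by linarith : (0:ℝ) < x + s + 1)) hs0 (by linarith : 0 ≤ 1 - s)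
      (by ring)
    simp only [smul_eq_mul, Function.comp_apply] at hconv
    have harg : s * (x + s) + (1 - s) * (x + s + 1) = x + 1 := by ring
    rw [harg] at hconv
    rw [Real.Gamma_add_one hx.ne', Real.Gamma_add_one hxs.ne'] at hconv
    rw [Real.log_mul hx.ne' hΓx.ne', Real.log_mul hxs.ne' hΓxs.ne'] at hconv
    -- hconv : log x + log Γ x ≤ s*log Γ(x+s) + (1-s)*(log(x+s) + log Γ(x+s))
    have key : Real.log x + Real.log (Real.Gamma x) ≤
        Real.log (Real.Gamma (x + s)) + (1 - s) * Real.log (x + s) := by nlinarith [hconv]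
    have hexp := Real.exp_le_exp.2 key
    rw [Real.exp_add, Real.exp_add, Real.exp_log hx, Real.exp_log hΓx,
      Real.exp_log hΓxs] at hexp
    have hpow : Real.exp ((1 - s) * Real.log (x + s)) = (x + s) ^ (1 - s) := by
      rw [Real.rpow_def_of_pos hxs, mul_comm]
    rw [hpow] at hexp
    -- hexp : x * Γ x ≤ Γ(x+s) * (x+s)^(1-s)
    have hx1s : (x / (x + s)) ^ (1 - s) = x / ((x + s) ^ (1 - s) * x ^ s) := by
      rw [Real.div_rpow hx.le hxs.le, Real.rpow_sub hx, Real.rpow_one, div_div, mul_comm]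
    rw [hx1s, div_le_div_iff₀ (by positivity) (by positivity)]
    calc x * (Real.Gamma x * x ^ s) = (x * Real.Gamma x) * x ^ s := by ring
      _ ≤ (Real.Gamma (x + s) * (x + s) ^ (1 - s)) * x ^ s := by
          exact mul_le_mul_of_nonneg_right hexp (by positivity)
      _ = Real.Gamma (x + s) * ((x + s) ^ (1 - s) * x ^ s) := by ring
  · -- upper bound
    filter_upwards [eventually_gt_atTop (0:ℝ)] with x hx
    have hxs : 0 < x + s := by linarith
    have hΓx : 0 < Real.Gamma x := Real.Gamma_pos_of_pos hx
    have hconv := Real.convexOn_log_Gamma.2 (Set.mem_Ioi.2 hx)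
      (Set.mem_Ioi.2 (by linarith : (0:ℝ) < x + 1)) (by linarith : 0 ≤ 1 - s) hs0 (by ring)
    simp only [smul_eq_mul, Function.comp_apply] at hconv
    have harg : (1 - s) * x + s * (x + 1) = x + s := by ring
    rw [harg] at hconv
    rw [Real.Gamma_add_one hx.ne', Real.log_mul hx.ne' hΓx.ne'] at hconv
    have key : Real.log (Real.Gamma (x + s)) ≤
        Real.log (Real.Gamma x) + s * Real.log x := by nlinarith [hconv]
    have hexp := Real.exp_le_exp.2 key
    rw [Real.exp_add, Real.exp_log (Real.Gamma_pos_of_pos hxs), Real.exp_log hΓx] at hexp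
    have hpow : Real.exp (s * Real.log x) = x ^ s := by
      rw [Real.rpow_def_of_pos hx, mul_comm]
    rw [hpow] at hexp
    rw [div_le_one (by positivity)]
    exact hexp

lemma gamma_step {c : ℝ} (hc : 0 ≤ c)
    (h : Tendsto (fun x : ℝ => Real.Gamma (x + c) / (Real.Gamma x * x ^ c)) atTop (nhds 1)) :
    Tendsto (fun x : ℝ => Real.Gamma (x + (c + 1)) / (Real.Gamma x * x ^ (c + 1))) atTop
      (nhds 1) := by
  have h2 : Tendsto (fun x : ℝ => (x + c) / x) atTop (nhds 1) := by
    have h3 : Tendsto (fun x : ℝ => 1 + c / x) atTop (nhds 1) := by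
      simpa using (tendsto_const_nhds (x := (1:ℝ))).add
        ((tendsto_const_nhds (x := c)).div_atTop tendsto_id)
    apply h3.congr'
    filter_upwards [eventually_gt_atTop (0:ℝ)] with x hx
    field_simp
  have := h.mul h2
  rw [mul_one] at this
  apply this.congr'
  filter_upwards [eventually_gt_atTop (0:ℝ)] with x hx
  have hxc : 0 < x + c := by linarith
  have hΓx : 0 < Real.Gamma x := Real.Gamma_pos_of_pos hx
  have hG : Real.Gamma (x + (c + 1)) = (x + c) * Real.Gamma (x + c) := by
    rw [← add_assoc, Real.Gamma_add_one hxc.ne']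
  have hp : x ^ (c + 1) = x ^ c * x := by
    rw [Real.rpow_add hx, Real.rpow_one]
  rw [hG, hp]
  have hxc' : (0:ℝ) < x ^ c := Real.rpow_pos_of_pos hx c
  field_simp

lemma gamma_ratio (c : ℝ) (hc : 0 ≤ c) :
    Tendsto (fun x : ℝ => Real.Gamma (x + c) / (Real.Gamma x * x ^ c)) atTop (nhds 1) := by
  have key : ∀ n : ℕ, ∀ c : ℝ, 0 ≤ c → c ≤ n + 1 →
      Tendsto (fun x : ℝ => Real.Gamma (x + c) / (Real.Gamma x * x ^ c)) atTop (nhds 1) := by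
    intro n
    induction n with
    | zero => intro c h0 h1; exact wendel h0 (by simpa using h1)
    | succ n ih =>
      intro c h0 h1
      by_cases hcn : c ≤ n + 1
      · exact ih c h0 hcn
      · push_neg at hcn
        have h2 : 0 ≤ c - 1 := by
          have : (0:ℝ) ≤ (n:ℝ) := Nat.cast_nonneg n
          linarith
        have h3 : c - 1 ≤ (n:ℝ) + 1 := by push_cast at h1; linarith
        have := gamma_step h2 (ih (c - 1) h2 h3)
        simpa using this
  exact key ⌈c⌉₊ c hc (le_trans (Nat.le_ceil c) (by push_cast; linarith))

lemma gamma_ratio_nat (a c : ℝ) (hc : 0 ≤ c) :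
    Tendsto (fun d : ℕ => Real.Gamma (d + a) / Real.Gamma (d + a + c) * (d : ℝ) ^ c) atTop
      (nhds 1) := by
  have hda : Tendsto (fun d : ℕ => (d : ℝ) + a) atTop atTop :=
    tendsto_atTop_add_const_right atTop a tendsto_natCast_atTop_atTop
  have h1 := (gamma_ratio c hc).comp hda
  have h2 : Tendsto (fun d : ℕ =>
      Real.Gamma (d + a) * ((d:ℝ) + a) ^ c / Real.Gamma ((d:ℝ) + a + c)) atTop (nhds 1) := by
    have := h1.inv₀ one_ne_zero
    rw [inv_one] at this
    apply this.congr
    intro d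
    simp only [Function.comp_apply, inv_div]
  have h3 : Tendsto (fun d : ℕ => ((d:ℝ) / ((d:ℝ) + a)) ^ c) atTop (nhds 1) := by
    have h4 : Tendsto (fun d : ℕ => 1 - a / ((d:ℝ) + a)) atTop (nhds 1) := by
      simpa using (tendsto_const_nhds (x := (1:ℝ))).sub
        ((tendsto_const_nhds (x := a)).div_atTop hda)
    have h5 : Tendsto (fun d : ℕ => (d:ℝ) / ((d:ℝ) + a)) atTop (nhds 1) := by
      apply h4.congr'
      filter_upwards [hda.eventually_gt_atTop 0, eventually_gt_atTop 0] with d hd hd0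
      field_simp
      ring
    simpa using h5.rpow_const (Or.inr hc)
  have := h2.mul h3
  rw [mul_one] at this
  apply this.congr'
  filter_upwards [hda.eventually_gt_atTop 0, eventually_gt_atTop 0] with d hd hd0
  have hd0' : (0:ℝ) < (d:ℝ) := by exact_mod_cast hd0
  rw [Real.div_rpow hd0'.le hd.le]
  have h6 : (0:ℝ) < ((d:ℝ) + a) ^ c := Real.rpow_pos_of_pos hd c
  field_simp

lemma sum_part (m : ℕ) (hm : 1 ≤ m) (A B D : ℝ) (hA0 : 0 < A) (hD : 0 < D) :
    Filter.Tendsto (fun d : ℕ =>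
      (D + D / m * ∑ i ∈ Finset.Ico m d, (i : ℝ) / (A * i + B)) / d) Filter.atTop
      (nhds (D / m * A⁻¹)) := by
  have hf : Tendsto (fun i : ℕ => (i : ℝ) / (A * i + B)) atTop (nhds A⁻¹) := by
    have h0 : Tendsto (fun i : ℕ => A + B / (i : ℝ)) atTop (nhds A) := by
      simpa using (tendsto_const_nhds (x := A)).add
        ((tendsto_const_nhds (x := B)).div_atTop tendsto_natCast_atTop_atTop)
    have h1 := h0.inv₀ hA0.ne'
    apply h1.congr'
    filter_upwards [eventually_gt_atTop 0] with i hi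
    have hi' : (0:ℝ) < (i:ℝ) := by exact_mod_cast hi
    rw [show A + B / (i:ℝ) = (A * i + B) / i by field_simp, inv_div]
  have hces := hf.cesaro
  have hc1 := tendsto_const_div_atTop_nhds_zero_nat D
  have hc2 := tendsto_const_div_atTop_nhds_zero_nat
    (∑ i ∈ Finset.range m, (i : ℝ) / (A * i + B))
  have hcomb := (hc1.add (hces.const_mul (D / m))).sub (hc2.const_mul (D / m))
  rw [show (0 : ℝ) + D / m * A⁻¹ - D / m * 0 = D / m * A⁻¹ by ring] at hcomb
  apply hcomb.congr'
  filter_upwards [eventually_ge_atTop m, eventually_gt_atTop 0] with d hdm hd0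
  have hd' : (0:ℝ) < (d:ℝ) := by exact_mod_cast hd0
  have hm' : ((m:ℝ)) ≠ 0 := by positivity
  rw [Finset.sum_Ico_eq_sub _ hdm]
  field_simp
  simp only [mul_comm A]
  ring

theorem statement8 (m : ℕ) (hm : 1 ≤ m) (A B D : ℝ) (hA0 : 0 < A) (hA1 : A < 1)
    (hAB : 2 * m * A + B = m) (hD : 0 < D) :
    Filter.Tendsto (fun d : ℕ => Kd m A B D d * (d : ℝ) ^ ((1 : ℝ) / A)) Filter.atTop
      (nhds (D / (A * m) *
        (Real.Gamma (m + (B + 1) / A) / (A * Real.Gamma (m + B / A))))) := by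
  have hm0 : (0:ℝ) < (m:ℝ) := by exact_mod_cast hm
  have hAm : (0:ℝ) < (m:ℝ) + B / A := by
    have h : (m:ℝ) + B / A = ((m:ℝ) * (1 - A)) / A := by
      field_simp; nlinarith [hAB]
    rw [h]
    exact div_pos (by nlinarith) hA0
  set c : ℝ := 1 / A + 1 with hcdef
  have hc0 : (0:ℝ) ≤ c := by positivity
  have hg := gamma_ratio_nat (B / A) c hc0
  set K1 : ℝ := Real.Gamma (m + (B + 1) / A) with hK1
  set K2 : ℝ := Real.Gamma (m + B / A) with hK2
  have hK2pos : 0 < K2 := Real.Gamma_pos_of_pos hAm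
  have hS := sum_part m hm A B D hA0 hD
  have hmul := (hg.mul (tendsto_const_nhds (x := K1 / (A * K2)))).mul hS
  rw [show (1:ℝ) * (K1 / (A * K2)) * (D / m * A⁻¹)
      = D / (A * m) * (K1 / (A * K2)) by ring] at hmul
  apply hmul.congr'
  filter_upwards [eventually_ge_atTop m, eventually_ge_atTop 1] with d hdm hd1
  have hd0 : (0:ℝ) < (d:ℝ) := by exact_mod_cast lt_of_lt_of_le Nat.zero_lt_one hd1
  have hdm' : (m:ℝ) ≤ (d:ℝ) := by exact_mod_cast hdm
  have hdA : (0:ℝ) < (d:ℝ) + B / A := by linarith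
  have harg : (d:ℝ) + B / A + c = (d:ℝ) + (B + A + 1) / A := by
    rw [hcdef]; field_simp; ring
  have hdA2 : (0:ℝ) < (d:ℝ) + (B + A + 1) / A := by
    rw [← harg]; exact add_pos_of_pos_of_nonneg hdA hc0
  have hG2 : (0:ℝ) < Real.Gamma ((d:ℝ) + (B + A + 1) / A) := Real.Gamma_pos_of_pos hdA2
  have hdc : (d:ℝ) ^ c = (d:ℝ) ^ ((1:ℝ)/A) * d := by
    rw [hcdef, Real.rpow_add hd0, Real.rpow_one]
  rw [harg, hdc]
  simp only [Kd, cmd, ← hK1, ← hK2]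
  generalize (D + D / ↑m * ∑ i ∈ Finset.Ico m d, (i:ℝ) / (A * ↑i + B)) = T
  generalize Real.Gamma ((d:ℝ) + B / A) = G1
  generalize Real.Gamma ((d:ℝ) + (B + A + 1) / A) = G2 at hG2
  rw [show G1 / G2 * ((d:ℝ) ^ ((1:ℝ)/A) * ↑d) * (K1 / (A * K2)) * (T / ↑d)
      = G1 / G2 * (K1 / (A * K2)) * T * (d:ℝ) ^ ((1:ℝ)/A) * (↑d * (↑d)⁻¹) by ring,
    mul_inv_cancel₀ hd0.ne', mul_one]
  field_simp

end
end

section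
/- Let m ≥ 1 be an integer, A, B reals with 0 < A < 1 and 2mA + B = m, and D > 0. Then for every integer d ≥ m+1: K(d)/(binom(d,2)·c(m,d)) = (2D/(d·(d−1)·m))·(m + ∑_{i=m}^{d−1} i/(A·i+B)); moreover, d·K(d)/(binom(d,2)·c(m,d)) tends to 2D/(m·A) as d → ∞, i.e. K(d)/(binom(d,2)·c(m,d)) is asymptotically equivalent to (2D/(m·A))·d^{−1}. -/
open MeasureTheory ProbabilityTheory Real Filter

noncomputable section

variable {Ω : Type*}

theorem statement17 (m : ℕ) (hm : 1 ≤ m) (A B D : ℝ) (hA0 : 0 < A) (hA1 : A < 1)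
    (hAB : 2 * m * A + B = m) (hD : 0 < D) :
    (∀ d : ℕ, m + 1 ≤ d →
      Kd m A B D d / ((d.choose 2 : ℝ) * cmd m A B d) =
        2 * D / ((d : ℝ) * ((d : ℝ) - 1) * m) *
          (m + ∑ i ∈ Finset.Ico m d, (i : ℝ) / (A * i + B))) ∧
    Filter.Tendsto
      (fun d : ℕ => (d : ℝ) * (Kd m A B D d / ((d.choose 2 : ℝ) * cmd m A B d)))
      Filter.atTop (nhds (2 * D / (m * A))) := by
  have hm1 : (1:ℝ) ≤ (m:ℝ) := by exact_mod_cast hm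
  have hm0 : (m:ℝ) ≠ 0 := by linarith
  have hAmB : 0 < A * m + B := by nlinarith
  have hBA : 0 < (m:ℝ) + B / A := by
    have h : (m:ℝ) + B / A = (A * m + B) / A := by
      rw [add_div, mul_div_cancel_left₀ _ hA0.ne']
    rw [h]; exact div_pos hAmB hA0
  have h1A : 0 < 1 / A := by positivity
  -- part 1
  have hpart1 : ∀ d : ℕ, m + 1 ≤ d →
      Kd m A B D d / ((d.choose 2 : ℝ) * cmd m A B d) =
        2 * D / ((d : ℝ) * ((d : ℝ) - 1) * m) *
          (m + ∑ i ∈ Finset.Ico m d, (i : ℝ) / (A * i + B)) := by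
    intro d hd
    have hdm : (m:ℝ) + 1 ≤ (d:ℝ) := by exact_mod_cast hd
    have hd0 : (d:ℝ) ≠ 0 := by linarith
    have hd1 : (d:ℝ) - 1 ≠ 0 := by
      have : (2:ℝ) ≤ (d:ℝ) := by linarith
      linarith
    have a1 : 0 < (d:ℝ) + B / A := by linarith
    have a2 : 0 < (m:ℝ) + (B + 1) / A := by
      have h : (B + 1)/A = B/A + 1/A := by rw [add_div]
      rw [h]; linarith
    have a3 : 0 < (d:ℝ) + (B + A + 1) / A := by
      have h : (B + A + 1)/A = B/A + (A+1)/A := by rw [← add_div]; ring_nf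
      have h2 : 0 < (A+1)/A := by positivity
      rw [h]; linarith
    have hc : 0 < cmd m A B d := by
      unfold cmd
      exact div_pos (mul_pos (Real.Gamma_pos_of_pos a1) (Real.Gamma_pos_of_pos a2))
        (mul_pos (mul_pos hA0 (Real.Gamma_pos_of_pos a3)) (Real.Gamma_pos_of_pos hBA))
    unfold Kd
    rw [Nat.cast_choose_two]
    field_simp
    ring_nf
    exact congrArg _ (Finset.sum_congr rfl fun x _ => by ring)
  refine ⟨hpart1, ?_⟩
  -- limit
  set u : ℕ → ℝ := fun i => (i : ℝ) / (A * i + B) with hu_def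
  have hu : Tendsto u atTop (nhds A⁻¹) := by
    have h0 : Tendsto (fun i : ℕ => A + B / i) atTop (nhds A) := by
      have hb : Tendsto (fun i : ℕ => B / (i:ℝ)) atTop (nhds 0) :=
        Tendsto.div_atTop tendsto_const_nhds tendsto_natCast_atTop_atTop
      simpa using hb.const_add A
    have h1 : Tendsto (fun i : ℕ => (A + B / i)⁻¹) atTop (nhds A⁻¹) :=
      h0.inv₀ hA0.ne'
    apply h1.congr'
    filter_upwards [eventually_ge_atTop 1] with i hi
    have hi0 : (i:ℝ) ≠ 0 := by
      have : (1:ℝ) ≤ (i:ℝ) := by exact_mod_cast hi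
      linarith
    show (A + B / i)⁻¹ = (i:ℝ) / (A * i + B)
    have h2 : A + B / i = (A * i + B) / i := by
      rw [add_div, mul_div_cancel_right₀ _ hi0]
    rw [h2, inv_div]
  have hT : Tendsto (fun n : ℕ => ((n:ℝ))⁻¹ * ∑ i ∈ Finset.range n, u i) atTop (nhds A⁻¹) :=
    hu.cesaro
  -- (m + S_d)/d → A⁻¹
  have hMS : Tendsto (fun d : ℕ => ((m:ℝ) + ∑ i ∈ Finset.Ico m d, u i) / d) atTop (nhds A⁻¹) := by
    have hconst : Tendsto (fun d : ℕ => ((m:ℝ) - ∑ i ∈ Finset.range m, u i) / d) atTop (nhds 0) :=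
      tendsto_const_nhds.div_atTop tendsto_natCast_atTop_atTop
    have := hT.add hconst
    rw [add_zero] at this
    apply this.congr'
    filter_upwards [eventually_ge_atTop m] with d hd
    have hsum : ∑ i ∈ Finset.Ico m d, u i
        = ∑ i ∈ Finset.range d, u i - ∑ i ∈ Finset.range m, u i := by
      rw [Finset.sum_Ico_eq_sub _ hd]
    rw [hsum]
    rcases Nat.eq_zero_or_pos d with h0 | h0
    · simp [h0]
    · have hd0 : (d:ℝ) ≠ 0 := Nat.cast_ne_zero.2 h0.ne'
      field_simp
      ring
  have hq : Tendsto (fun d : ℕ => (d:ℝ) / ((d:ℝ) - 1)) atTop (nhds 1) := by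
    have h0 : Tendsto (fun d : ℕ => ((d:ℝ) - 1)) atTop atTop := by
      have h := tendsto_atTop_add_const_right atTop (-1 : ℝ)
        (tendsto_natCast_atTop_atTop (R := ℝ))
      simpa [sub_eq_add_neg] using h
    have h1 : Tendsto (fun d : ℕ => 1 + ((d:ℝ) - 1)⁻¹) atTop (nhds 1) := by
      simpa using (h0.inv_tendsto_atTop).const_add 1
    apply h1.congr'
    filter_upwards [eventually_ge_atTop 2] with d hd
    have hd1 : (d:ℝ) - 1 ≠ 0 := by
      have : (2:ℝ) ≤ (d:ℝ) := by exact_mod_cast hd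
      linarith
    field_simp
    ring
  have hmain : Tendsto
      (fun d : ℕ => 2 * D / m * ((((m:ℝ) + ∑ i ∈ Finset.Ico m d, u i) / d) * ((d:ℝ)/((d:ℝ)-1))))
      atTop (nhds (2 * D / (m * A))) := by
    have := (hMS.mul hq).const_mul (2 * D / m)
    rw [mul_one] at this
    have heq : 2 * D / m * A⁻¹ = 2 * D / (m * A) := by
      field_simp
    rwa [heq] at this
  apply hmain.congr'
  filter_upwards [eventually_ge_atTop (m + 1)] with d hd
  rw [hpart1 d hd]
  have hdm : (m:ℝ) + 1 ≤ (d:ℝ) := by exact_mod_cast hd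
  have hd0 : (d:ℝ) ≠ 0 := by linarith
  have hd1 : (d:ℝ) - 1 ≠ 0 := by linarith
  field_simp

end
end
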